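/- For any real α > -1 and any y > 0, the integral over ℝⁿ of the function x ↦ Γ((α+n+1)/2)/(Γ((α+1)/2)·π^{n/2}) · y^{α+1}/(|x|²+y²)^{(α+n+1)/2} equals 1. -/

import Mathlib

open Real MeasureTheory

private lemma aux_lintegral_eq {X : Type*} [MeasurableSpace X] {μ : Measure X} {f : X → ℝ} {c : ℝ}
    (hf : AEStronglyMeasurable f μ) (h0 : 0 ≤ᵐ[μ] f) (hc : 0 < c) (h : ∫ x, f x ∂μ = c) :
    ∫⁻ x, ENNReal.ofReal (f x) ∂μ = ENNReal.ofReal c := by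
  rw [integral_eq_lintegral_of_nonneg_ae h0 hf] at h
  rcases eq_top_or_lt_top (∫⁻ x, ENNReal.ofReal (f x) ∂μ) with ht | ht
  · rw [ht] at h; simp at h; exact absurd h.symm hc.ne'
  · rw [← h, ENNReal.ofReal_toReal ht.ne]

theorem stmt0 (n : ℕ) (hn : 1 ≤ n) (α : ℝ) (hα : -1 < α) (y : ℝ) (hy : 0 < y) :
    ∫ x : EuclideanSpace ℝ (Fin n),
      Real.Gamma ((α + n + 1) / 2) / (Real.Gamma ((α + 1) / 2) * Real.pi ^ ((n : ℝ) / 2))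
        * y ^ (α + 1) / (‖x‖ ^ 2 + y ^ 2) ^ ((α + n + 1) / 2) = 1 := by
  have hn' : (0:ℝ) < n := by exact_mod_cast hn
  set V := EuclideanSpace ℝ (Fin n)
  set s : ℝ := (α + n + 1) / 2 with hs_def
  set b : ℝ := (α + 1) / 2 with hb_def
  have hspos : 0 < s := by rw [hs_def]; linarith
  have hbpos : 0 < b := by rw [hb_def]; linarith
  have hΓs : 0 < Real.Gamma s := Real.Gamma_pos_of_pos hspos
  have hΓb : 0 < Real.Gamma b := Real.Gamma_pos_of_pos hbpos
  have hπ : (0:ℝ) < π ^ ((n:ℝ)/2) := Real.rpow_pos_of_pos Real.pi_pos _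
  have hy2 : (0:ℝ) < y ^ 2 := by positivity
  have hrx : ∀ x : V, (0:ℝ) < ‖x‖ ^ 2 + y ^ 2 := fun x => by positivity
  -- key integral
  have key : ∫ x : V, (‖x‖ ^ 2 + y ^ 2) ^ (-s)
      = (Real.Gamma s)⁻¹ * (π ^ ((n:ℝ)/2) * ((1 / y ^ 2) ^ b * Real.Gamma b)) := by
    have hcont : Continuous fun x : V => (‖x‖ ^ 2 + y ^ 2) ^ (-s) := by
      apply Continuous.rpow_const (by continuity) (fun x => Or.inl (hrx x).ne')
    rw [integral_eq_lintegral_of_nonneg_ae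
      (Filter.Eventually.of_forall fun x => Real.rpow_nonneg (hrx x).le _)
      hcont.aestronglyMeasurable]
    have step1 : ∀ x : V, ENNReal.ofReal ((‖x‖ ^ 2 + y ^ 2) ^ (-s))
        = ENNReal.ofReal (Real.Gamma s)⁻¹ *
          ∫⁻ t in Set.Ioi (0:ℝ), ENNReal.ofReal (t ^ (s-1) * Real.exp (-((‖x‖ ^ 2 + y ^ 2) * t))) := by
      intro x
      have hI := integral_rpow_mul_exp_neg_mul_Ioi hspos (hrx x)
      have hmeas : AEStronglyMeasurable (fun t : ℝ => t ^ (s-1) * Real.exp (-((‖x‖ ^ 2 + y ^ 2) * t)))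
          (volume.restrict (Set.Ioi 0)) :=
        ((measurable_id.pow measurable_const).mul
          ((show Continuous fun t : ℝ => Real.exp (-((‖x‖ ^ 2 + y ^ 2) * t)) by
            fun_prop).measurable)).aestronglyMeasurable
      have h0 : 0 ≤ᵐ[volume.restrict (Set.Ioi (0:ℝ))]
          (fun t : ℝ => t ^ (s-1) * Real.exp (-((‖x‖ ^ 2 + y ^ 2) * t))) := by
        filter_upwards [ae_restrict_mem measurableSet_Ioi] with t ht
        have : (0:ℝ) < t := ht
        positivity
      have hc : (0:ℝ) < (1 / (‖x‖ ^ 2 + y ^ 2)) ^ s * Real.Gamma s := by positivity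
      rw [aux_lintegral_eq hmeas h0 hc hI, ← ENNReal.ofReal_mul (by positivity)]
      congr 1
      rw [one_div, Real.inv_rpow (hrx x).le, ← Real.rpow_neg (hrx x).le]
      field_simp
    simp_rw [step1]
    rw [lintegral_const_mul' _ _ ENNReal.ofReal_ne_top,
      lintegral_lintegral_swap (show AEMeasurable (Function.uncurry fun (x : EuclideanSpace ℝ (Fin n)) (t : ℝ) =>
          ENNReal.ofReal (t ^ (s-1) * Real.exp (-((‖x‖ ^ 2 + y ^ 2) * t))))
          (volume.prod (volume.restrict (Set.Ioi 0))) from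
        (ENNReal.measurable_ofReal.comp
          ((measurable_snd.pow measurable_const).mul
            ((show Continuous fun p : (EuclideanSpace ℝ (Fin n)) × ℝ =>
                Real.exp (-((‖p.1‖ ^ 2 + y ^ 2) * p.2)) by fun_prop).measurable))).aemeasurable)]
    have inner : ∀ t ∈ Set.Ioi (0:ℝ),
        (∫⁻ x : V, ENNReal.ofReal (t ^ (s-1) * Real.exp (-((‖x‖ ^ 2 + y ^ 2) * t))))
        = ENNReal.ofReal (π ^ ((n:ℝ)/2) * (t ^ (b-1) * Real.exp (-(y ^ 2 * t)))) := by
      intro t ht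
      have ht : (0:ℝ) < t := ht
      have heq : ∀ x : V, t ^ (s-1) * Real.exp (-((‖x‖ ^ 2 + y ^ 2) * t))
          = (t ^ (s-1) * Real.exp (-(y ^ 2 * t))) * Real.exp (-t * ‖x‖ ^ 2) := by
        intro x
        rw [mul_assoc, ← Real.exp_add]; ring_nf
      have hpos : (0:ℝ) ≤ t ^ (s-1) * Real.exp (-(y ^ 2 * t)) := by positivity
      simp_rw [heq, ENNReal.ofReal_mul hpos]
      rw [lintegral_const_mul' _ _ ENNReal.ofReal_ne_top]
      have hgauss : ∫ x : V, Real.exp (-t * ‖x‖ ^ 2) = (π / t) ^ ((n:ℝ)/2) := by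
        rw [GaussianFourier.integral_rexp_neg_mul_sq_norm ht]
        rw [show Module.finrank ℝ V = n from finrank_euclideanSpace_fin]
      rw [aux_lintegral_eq (f := fun x : EuclideanSpace ℝ (Fin n) => Real.exp (-t * ‖x‖ ^ 2))
        ((show Continuous fun x : EuclideanSpace ℝ (Fin n) => Real.exp (-t * ‖x‖ ^ 2) by
          fun_prop).aestronglyMeasurable)
        (Filter.Eventually.of_forall fun x => (Real.exp_pos _).le)
        (Real.rpow_pos_of_pos (by positivity) _) hgauss]
      rw [← ENNReal.ofReal_mul (by positivity)]
      congr 1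
      rw [Real.div_rpow Real.pi_pos.le ht.le]
      rw [div_eq_mul_inv, ← Real.rpow_neg ht.le]
      have : t ^ (s-1) * Real.exp (-(y ^ 2 * t)) * (π ^ ((n:ℝ)/2) * t ^ (-((n:ℝ)/2)))
          = π ^ ((n:ℝ)/2) * ((t ^ (s-1) * t ^ (-((n:ℝ)/2))) * Real.exp (-(y ^ 2 * t))) := by ring
      rw [this, ← Real.rpow_add ht]
      have : s - 1 + -((n:ℝ)/2) = b - 1 := by rw [hs_def, hb_def]; ring
      rw [this]
    rw [setLIntegral_congr_fun measurableSet_Ioi inner]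
    have hI2 := integral_rpow_mul_exp_neg_mul_Ioi hbpos hy2
    have h0 : 0 ≤ᵐ[volume.restrict (Set.Ioi (0:ℝ))]
        (fun t : ℝ => t ^ (b-1) * Real.exp (-(y ^ 2 * t))) := by
      filter_upwards [ae_restrict_mem measurableSet_Ioi] with t ht
      have : (0:ℝ) < t := ht
      positivity
    simp_rw [ENNReal.ofReal_mul hπ.le]
    rw [lintegral_const_mul' _ _ ENNReal.ofReal_ne_top,
      aux_lintegral_eq (f := fun t : ℝ => t ^ (b-1) * Real.exp (-(y ^ 2 * t)))
        ((measurable_id.pow measurable_const).mul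
          ((show Continuous fun t : ℝ => Real.exp (-(y ^ 2 * t)) by fun_prop).measurable)).aestronglyMeasurable
        h0 (by positivity) hI2]
    rw [← ENNReal.ofReal_mul hπ.le, ← ENNReal.ofReal_mul (by positivity),
      ENNReal.toReal_ofReal (by positivity)]
  -- finish
  have hrew : ∀ x : V,
      Real.Gamma ((α + n + 1) / 2) / (Real.Gamma ((α + 1) / 2) * π ^ ((n : ℝ) / 2))
        * y ^ (α + 1) / (‖x‖ ^ 2 + y ^ 2) ^ ((α + n + 1) / 2)
      = (Real.Gamma s / (Real.Gamma b * π ^ ((n:ℝ)/2)) * y ^ (α+1)) * (‖x‖ ^ 2 + y ^ 2) ^ (-s) := by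
    intro x
    rw [Real.rpow_neg (hrx x).le, div_eq_mul_inv]
  refine (integral_congr_ae (Filter.Eventually.of_forall hrew)).trans ?_
  rw [integral_const_mul, key]
  have hy2b : ((1:ℝ) / y ^ 2) ^ b = (y ^ (α+1))⁻¹ := by
    rw [one_div, Real.inv_rpow hy2.le]
    congr 1
    rw [← Real.rpow_natCast y 2, ← Real.rpow_mul hy.le]
    norm_num [hb_def]
    ring_nf
  rw [hy2b]
  have hyα : (0:ℝ) < y ^ (α+1) := Real.rpow_pos_of_pos hy _
  field_simp
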